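/- Let G be a group, L=M(G,2), and S a normal subloop of L. Then either S⊆G (and S⊴G), or both G/(S∩G) and L/S are elementary abelian 2-groups. Conversely, every normal subgroup S of G is a normal subloop of L. -/

import Mathlib

/-- The Chein loop M(G,2) on G ∪ Ḡ (the copy Ḡ realized via Sum.inr):
x∘y = xy, x∘ȳ = (yx)‾, x̄∘y = (xy⁻¹)‾, x̄∘ȳ = y⁻¹x. -/
def cheinMul {G : Type*} [Group G] : G ⊕ G → G ⊕ G → G ⊕ G
  | Sum.inl x, Sum.inl y => Sum.inl (x * y)
  | Sum.inl x, Sum.inr y => Sum.inr (y * x)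
  | Sum.inr x, Sum.inl y => Sum.inr (x * y⁻¹)
  | Sum.inr x, Sum.inr y => Sum.inl (y⁻¹ * x)

/-- A subset of a magma is a subloop if it contains the unit, is closed under
multiplication, and equations are solvable within it. -/
def IsSubloopM {L : Type*} (mul : L → L → L) (one : L) (A : Set L) : Prop :=
  one ∈ A ∧ (∀ a ∈ A, ∀ b ∈ A, mul a b ∈ A) ∧
    (∀ a ∈ A, ∀ b ∈ A, ∃ c ∈ A, mul a c = b) ∧
    (∀ a ∈ A, ∀ b ∈ A, ∃ c ∈ A, mul c a = b)

/-- A subloop A is normal if xA = Ax, x(Ay) = (xA)y and x(yA) = (xy)A. -/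
def IsNormalSubloopM {L : Type*} (mul : L → L → L) (one : L) (A : Set L) : Prop :=
  IsSubloopM mul one A ∧
  (∀ x : L, (fun a => mul x a) '' A = (fun a => mul a x) '' A) ∧
  (∀ x y : L, (fun b => mul x b) '' ((fun a => mul a y) '' A)
      = (fun b => mul b y) '' ((fun a => mul x a) '' A)) ∧
  (∀ x y : L, (fun b => mul x b) '' ((fun a => mul y a) '' A)
      = (fun a => mul (mul x y) a) '' A)

lemma image_eq_aux {G α : Type*} (T : Set G) (f g : G → α)
    (h1 : ∀ t ∈ T, ∃ s ∈ T, f t = g s) (h2 : ∀ t ∈ T, ∃ s ∈ T, g t = f s) :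
    f '' T = g '' T := by
  apply Set.Subset.antisymm
  · rintro _ ⟨t, ht, rfl⟩
    obtain ⟨s, hs, he⟩ := h1 t ht
    exact ⟨s, hs, he.symm⟩
  · rintro _ ⟨t, ht, rfl⟩
    obtain ⟨s, hs, he⟩ := h2 t ht
    exact ⟨s, hs, he.symm⟩

set_option maxHeartbeats 2000000 in
/-- For L = M(G,2): every normal subloop S of L is either contained in G and a
normal subgroup of G, or else both G/(S∩G) and L/S are elementary abelian
2-groups (all squares, commutators — and for L also associators — lie in the
kernel).  Conversely, every normal subgroup of G is a normal subloop of L. -/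
theorem stmt18 (G : Type*) [Group G] :
    (∀ S : Set (G ⊕ G), IsNormalSubloopM (cheinMul (G := G)) (Sum.inl 1) S →
      ((∃ T : Subgroup G, T.Normal ∧ S = Sum.inl '' (T : Set G)) ∨
        ((∀ x : G, Sum.inl (x * x) ∈ S) ∧
         (∀ x y : G, Sum.inl (x * y * x⁻¹ * y⁻¹) ∈ S) ∧
         (∀ p : G ⊕ G, cheinMul p p ∈ S) ∧
         (∀ p q : G ⊕ G, ∃ s ∈ S, cheinMul p q = cheinMul (cheinMul q p) s) ∧
         (∀ p q r : G ⊕ G, ∃ s ∈ S,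
           cheinMul (cheinMul p q) r = cheinMul (cheinMul p (cheinMul q r)) s)))) ∧
    (∀ T : Subgroup G, T.Normal →
      IsNormalSubloopM (cheinMul (G := G)) (Sum.inl 1) (Sum.inl '' (T : Set G))) := by
  constructor
  · intro S hS
    obtain ⟨⟨hone, hmul, hsolR, hsolL⟩, hxc, hmid, hlas⟩ := hS
    -- inverses inside S (for inl elements)
    have hinv : ∀ u : G, Sum.inl u ∈ S → Sum.inl u⁻¹ ∈ S := by
      intro u hu
      obtain ⟨c, hc, he⟩ := hsolR _ hu _ hone
      rcases c with w | w
      · have : u * w = 1 := by simpa [cheinMul] using he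
        have hw : w = u⁻¹ := (inv_eq_of_mul_eq_one_right this).symm
        rwa [hw] at hc
      · simp [cheinMul] at he
    set T : Subgroup G :=
      { carrier := {g : G | Sum.inl g ∈ S}
        one_mem' := hone
        mul_mem' := fun {u v} hu hv => by
          have := hmul _ hu _ hv
          simpa [cheinMul] using this
        inv_mem' := fun {u} hu => hinv u hu } with hTdef
    have hmemT : ∀ g : G, g ∈ T ↔ Sum.inl g ∈ S := fun g => Iff.rfl
    have hNT : T.Normal := by
      constructor
      intro n hn g
      have h1 : Sum.inl (g * n) ∈ (fun a => cheinMul (Sum.inl g) a) '' S :=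
        ⟨Sum.inl n, hn, rfl⟩
      rw [hxc] at h1
      obtain ⟨s, hs, he⟩ := h1
      rcases s with u | u
      · have hug : u * g = g * n := by simpa [cheinMul] using he
        have : u = g * n * g⁻¹ := by rw [← hug]; group
        rw [hmemT, ← this]; exact hs
      · simp [cheinMul] at he
    haveI := hNT
    by_cases hbar : ∃ a : G, Sum.inr a ∈ S
    · -- right branch
      obtain ⟨a, ha⟩ := hbar
      right
      -- squares in T
      have hsq : ∀ g : G, g * g ∈ T := by
        intro g
        have h1 : Sum.inr (a * g) ∈ (fun b => cheinMul (Sum.inl g) b) '' S :=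
          ⟨Sum.inr a, ha, rfl⟩
        rw [hxc] at h1
        obtain ⟨s, hs, he⟩ := h1
        rcases s with u | u
        · simp [cheinMul] at he
        · have hug : u * g⁻¹ = a * g := by simpa [cheinMul] using he
          have hu : u = a * g * g := by rw [← hug]; group
          rw [hu] at hs
          have h2 := hmul _ hs _ ha
          have h3 : (cheinMul (Sum.inr (a * g * g)) (Sum.inr a) : G ⊕ G)
              = Sum.inl (a⁻¹ * (a * g * g)) := rfl
          rw [h3] at h2
          have h4 : a⁻¹ * (a * g * g) = g * g := by group
          rwa [hmemT, ← h4]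
      -- quotient machinery
      have hq1 : ∀ q : G ⧸ T, q * q = 1 := by
        intro q
        induction q using QuotientGroup.induction_on with
        | H g =>
          rw [← QuotientGroup.mk_mul, QuotientGroup.eq_one_iff]
          exact hsq g
      have hqi : ∀ q : G ⧸ T, q⁻¹ = q := fun q => inv_eq_of_mul_eq_one_right (hq1 q)
      have hqc : ∀ q r : G ⧸ T, q * r = r * q := by
        intro q r
        conv_lhs => rw [← hqi (q * r)]
        rw [mul_inv_rev, hqi, hqi]
      have hql : ∀ q r s : G ⧸ T, q * (r * s) = r * (q * s) := by
        intro q r s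
        rw [← mul_assoc, hqc q r, mul_assoc]
      have hq2 : ∀ q r : G ⧸ T, q * (q * r) = r := fun q r => by
        rw [← mul_assoc, hq1, one_mul]
      have memQ : ∀ w : G, ((w : G ⧸ T) = 1) → Sum.inl w ∈ S := fun w h =>
        (hmemT w).mp ((QuotientGroup.eq_one_iff w).mp h)
      have solveL : ∀ u v : G, ((u⁻¹ * v : G) : G ⧸ T) = 1 →
          ∃ s ∈ S, Sum.inl v = cheinMul (Sum.inl u) s := by
        intro u v h
        refine ⟨Sum.inl (u⁻¹ * v), memQ _ h, ?_⟩
        simp [cheinMul]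
      have solveR : ∀ u v : G, ((v⁻¹ * u : G) : G ⧸ T) = 1 →
          ∃ s ∈ S, Sum.inr v = cheinMul (Sum.inr u) s := by
        intro u v h
        refine ⟨Sum.inl (v⁻¹ * u), memQ _ h, ?_⟩
        have : u * (v⁻¹ * u)⁻¹ = v := by group
        simp [cheinMul, this]
      refine ⟨fun x => (hmemT _).mp (hsq x), ?_, ?_, ?_, ?_⟩
      · intro x y
        apply memQ
        simp only [QuotientGroup.mk_mul, QuotientGroup.mk_inv, hqi]
        simp [mul_assoc, hqc, hql, hq1, hq2]
      · rintro (x | x)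
        · exact (hmemT _).mp (hsq x)
        · show Sum.inl (x⁻¹ * x) ∈ S
          simpa using hone
      · rintro (x | x) (y | y) <;> simp only [cheinMul] <;>
          first
            | (apply solveL; simp only [QuotientGroup.mk_mul, QuotientGroup.mk_inv, hqi];
               simp [mul_assoc, hqc, hql, hq1, hq2])
            | (apply solveR; simp only [QuotientGroup.mk_mul, QuotientGroup.mk_inv, hqi];
               simp [mul_assoc, hqc, hql, hq1, hq2])
      · rintro (x | x) (y | y) (z | z) <;> simp only [cheinMul] <;>
          first
            | (apply solveL; simp only [QuotientGroup.mk_mul, QuotientGroup.mk_inv, hqi];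
               simp [mul_assoc, hqc, hql, hq1, hq2])
            | (apply solveR; simp only [QuotientGroup.mk_mul, QuotientGroup.mk_inv, hqi];
               simp [mul_assoc, hqc, hql, hq1, hq2])
    · left
      push_neg at hbar
      refine ⟨T, hNT, ?_⟩
      ext p
      rcases p with g | g
      · constructor
        · intro hg; exact ⟨g, hg, rfl⟩
        · rintro ⟨t, ht, he⟩
          obtain rfl : t = g := by simpa using he
          exact ht
      · constructor
        · intro hg; exact absurd hg (hbar g)
        · rintro ⟨t, ht, he⟩; simp at he
  · intro T hN
    refine ⟨⟨⟨1, T.one_mem, rfl⟩, ?_, ?_, ?_⟩, ?_, ?_, ?_⟩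
    · rintro _ ⟨u, hu, rfl⟩ _ ⟨v, hv, rfl⟩
      exact ⟨u * v, T.mul_mem hu hv, rfl⟩
    · rintro _ ⟨u, hu, rfl⟩ _ ⟨v, hv, rfl⟩
      exact ⟨Sum.inl (u⁻¹ * v), ⟨u⁻¹ * v, T.mul_mem (T.inv_mem hu) hv, rfl⟩,
        by simp [cheinMul]⟩
    · rintro _ ⟨u, hu, rfl⟩ _ ⟨v, hv, rfl⟩
      exact ⟨Sum.inl (v * u⁻¹), ⟨v * u⁻¹, T.mul_mem hv (T.inv_mem hu), rfl⟩,
        by simp [cheinMul]⟩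
    · rintro (g | g) <;> rw [Set.image_image, Set.image_image] <;>
        apply image_eq_aux <;> intro t ht
      · exact ⟨g * t * g⁻¹, hN.conj_mem t ht g, by simp only [cheinMul, Sum.inl.injEq, Sum.inr.injEq]; group⟩
      · exact ⟨g⁻¹ * t * g, by simpa using hN.conj_mem t ht g⁻¹, by simp [cheinMul]; group⟩
      · exact ⟨t⁻¹, T.inv_mem ht, by simp [cheinMul]⟩
      · exact ⟨t⁻¹, T.inv_mem ht, by simp [cheinMul]⟩
    · rintro (a | a) (b | b) <;> rw [Set.image_image, Set.image_image, Set.image_image, Set.image_image] <;>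
        apply image_eq_aux <;> intro t ht
      · exact ⟨t, ht, by simp [cheinMul]; group⟩
      · exact ⟨t, ht, by simp [cheinMul]; group⟩
      · exact ⟨a⁻¹ * t * a, by simpa using hN.conj_mem t ht a⁻¹, by simp [cheinMul]; group⟩
      · exact ⟨a * t * a⁻¹, hN.conj_mem t ht a, by simp [cheinMul]; group⟩
      · exact ⟨b⁻¹ * t * b, by simpa using hN.conj_mem t ht b⁻¹, by simp [cheinMul]; group⟩
      · exact ⟨b * t * b⁻¹, hN.conj_mem t ht b, by simp [cheinMul]; group⟩
      · exact ⟨a⁻¹ * b * t * b⁻¹ * a, by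
          have := hN.conj_mem _ (hN.conj_mem t ht b) a⁻¹; simpa [mul_assoc] using this,
          by simp [cheinMul]; group⟩
      · exact ⟨b⁻¹ * a * t * a⁻¹ * b, by
          have := hN.conj_mem t ht (b⁻¹ * a); simpa [mul_assoc] using this,
          by simp [cheinMul]; group⟩
    · rintro (a | a) (b | b) <;> rw [Set.image_image, Set.image_image, Set.image_image] <;>
        apply image_eq_aux <;> intro t ht
      · exact ⟨t, ht, by simp [cheinMul]; group⟩
      · exact ⟨t, ht, by simp [cheinMul]; group⟩
      · exact ⟨a⁻¹ * t * a, by simpa using hN.conj_mem t ht a⁻¹, by simp [cheinMul]; group⟩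
      · exact ⟨a * t * a⁻¹, hN.conj_mem t ht a, by simp [cheinMul]; group⟩
      · exact ⟨b * t * b⁻¹, hN.conj_mem t ht b, by simp only [cheinMul, Sum.inl.injEq, Sum.inr.injEq]; group⟩
      · exact ⟨b⁻¹ * t * b, by simpa using hN.conj_mem t ht b⁻¹, by simp [cheinMul]; group⟩
      · exact ⟨a⁻¹ * b * t * b⁻¹ * a, by
          have := hN.conj_mem _ (hN.conj_mem t ht b) a⁻¹; simpa [mul_assoc] using this,
          by simp [cheinMul]; group⟩
      · exact ⟨b⁻¹ * a * t * a⁻¹ * b, by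
          have := hN.conj_mem t ht (b⁻¹ * a); simpa [mul_assoc] using this,
          by simp only [cheinMul, Sum.inl.injEq, Sum.inr.injEq]; group⟩
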